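/- Let d ∈ ℕ and α ∈ ℝ^d, and define ψ_α(ξ) := √2 / (A₀(α) − A_j(α) ξ^j). Then at every ξ ∈ ℝ^d with A₀(α) − A_j(α) ξ^j ≠ 0, the function ψ_α satisfies the static self-similar equation −(δ^{jk} − ξ^jξ^k) ∂_j∂_k ψ_α(ξ) + 4 ξ^j ∂_j ψ_α(ξ) + 2 ψ_α(ξ) = ψ_α(ξ)³. -/

import Mathlib

noncomputable section

/-- `A₀(α) = cosh(α^d)···cosh(α¹)` -/
def A0 {d : ℕ} (α : Fin d → ℝ) : ℝ := ∏ k, Real.cosh (α k)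

/-- `A_j(α) = cosh(α^d)···cosh(α^{j+1}) sinh(α^j)` -/
def Ac {d : ℕ} (α : Fin d → ℝ) (j : Fin d) : ℝ :=
  (∏ k ∈ Finset.Ioi j, Real.cosh (α k)) * Real.sinh (α j)

/-- the partial derivative in the `i`-th coordinate direction -/
def pdR {d : ℕ} (i : Fin d) (f : EuclideanSpace ℝ (Fin d) → ℝ) :
    EuclideanSpace ℝ (Fin d) → ℝ :=
  fun x => fderiv ℝ f x (EuclideanSpace.single i 1)

/-- `ψ_α(ξ) = √2 / (A₀(α) − A_j(α)ξ^j)` -/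
def psiA {d : ℕ} (α : Fin d → ℝ) (ξ : EuclideanSpace ℝ (Fin d)) : ℝ :=
  Real.sqrt 2 / (A0 α - ∑ j, Ac α j * ξ j)

-- telescoping identity over ℕ
lemma nat_tele (c : ℕ → ℝ) : ∀ n : ℕ,
    ∑ j ∈ Finset.range n, (∏ k ∈ Finset.Ico (j+1) n, c k)^2 * (c j ^ 2 - 1)
      = (∏ k ∈ Finset.range n, c k)^2 - 1 := by
  intro n
  induction n with
  | zero => simp
  | succ n ih =>
    rw [Finset.sum_range_succ, Finset.prod_range_succ]
    have h1 : ∀ j ∈ Finset.range n,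
        (∏ k ∈ Finset.Ico (j+1) (n+1), c k)^2 * (c j ^ 2 - 1)
          = c n ^ 2 * ((∏ k ∈ Finset.Ico (j+1) n, c k)^2 * (c j ^ 2 - 1)) := by
      intro j hj
      rw [Finset.prod_Ico_succ_top (Nat.succ_le_of_lt (Finset.mem_range.mp hj))]
      ring
    rw [Finset.sum_congr rfl h1, ← Finset.mul_sum, ih]
    simp [Finset.Ico_self]
    ring

lemma key_id {d : ℕ} (α : Fin d → ℝ) : (A0 α)^2 - ∑ j, (Ac α j)^2 = 1 := by
  classical
  set c : ℕ → ℝ := fun n => if h : n < d then Real.cosh (α ⟨n, h⟩) else 1 with hc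
  have hA0 : A0 α = ∏ k ∈ Finset.range d, c k := by
    rw [A0, Finset.prod_range]
    exact Finset.prod_congr rfl fun i _ => by simp [hc, i.isLt]
  have hAc : ∀ j : Fin d, (Ac α j)^2
      = (∏ k ∈ Finset.Ico (j.1+1) d, c k)^2 * (c j.1 ^ 2 - 1) := by
    intro j
    have hmap : (Finset.Ioi j).map Fin.valEmbedding = Finset.Ico (j.1+1) d := by
      rw [Fin.map_valEmbedding_Ioi]
      ext x
      simp only [Finset.mem_Ioc, Finset.mem_Ioo, Finset.mem_Ico]
      have := j.isLt
      omega
    have hprod : ∏ k ∈ Finset.Ioi j, Real.cosh (α k)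
        = ∏ k ∈ Finset.Ico (j.1+1) d, c k := by
      rw [← hmap, Finset.prod_map]
      exact Finset.prod_congr rfl fun i _ => by simp [hc, i.isLt]
    have hcj : c j.1 = Real.cosh (α j) := by simp [hc, j.isLt]
    rw [Ac, mul_pow, hprod, hcj]
    have := Real.cosh_sq_sub_sinh_sq (α j)
    nlinarith [this]
  have hsum : ∑ j, (Ac α j)^2
      = ∑ j ∈ Finset.range d, (∏ k ∈ Finset.Ico (j+1) d, c k)^2 * (c j ^ 2 - 1) := by
    rw [Finset.sum_range]
    exact Finset.sum_congr rfl fun j _ => hAc j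
  rw [hA0, hsum, nat_tele c d]
  ring

section deriv

variable {d : ℕ} (α : Fin d → ℝ)

def Lmap : EuclideanSpace ℝ (Fin d) →L[ℝ] ℝ :=
  ∑ j, Ac α j • EuclideanSpace.proj (𝕜 := ℝ) j

lemma Lmap_apply (x : EuclideanSpace ℝ (Fin d)) : Lmap α x = ∑ j, Ac α j * x j := by
  simp [Lmap]

lemma Lmap_single (k : Fin d) : Lmap α (EuclideanSpace.single k 1) = Ac α k := by
  classical
  rw [Lmap_apply]
  simp [EuclideanSpace.single_apply]

def fden (x : EuclideanSpace ℝ (Fin d)) : ℝ := A0 α - ∑ j, Ac α j * x j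

lemma fden_hasFDerivAt (x : EuclideanSpace ℝ (Fin d)) :
    HasFDerivAt (fden α) (-(Lmap α)) x := by
  have h : HasFDerivAt (fun y : EuclideanSpace ℝ (Fin d) => A0 α - Lmap α y)
      (0 - Lmap α) x := (hasFDerivAt_const _ _).sub (Lmap α).hasFDerivAt
  have he : (fun y : EuclideanSpace ℝ (Fin d) => A0 α - Lmap α y) = fden α := by
    funext y; rw [fden, Lmap_apply]
  rw [he, zero_sub] at h
  exact h

lemma psiA_eq : psiA α = fun x => Real.sqrt 2 * (fden α x)⁻¹ := by
  funext x; rw [psiA, fden, div_eq_mul_inv]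

lemma psiA_hasFDerivAt {x : EuclideanSpace ℝ (Fin d)} (hx : fden α x ≠ 0) :
    HasFDerivAt (psiA α) ((Real.sqrt 2 * -(((fden α x)^2)⁻¹)) • (-(Lmap α))) x := by
  have h1 : HasDerivAt (fun t : ℝ => Real.sqrt 2 * t⁻¹)
      (Real.sqrt 2 * -(((fden α x)^2)⁻¹)) (fden α x) :=
    (hasDerivAt_inv hx).const_mul _
  have := h1.comp_hasFDerivAt x (fden_hasFDerivAt α x)
  rw [psiA_eq]
  exact this

lemma pd1 (k : Fin d) {x : EuclideanSpace ℝ (Fin d)} (hx : fden α x ≠ 0) :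
    pdR k (psiA α) x = Real.sqrt 2 * Ac α k * ((fden α x)^2)⁻¹ := by
  rw [pdR, (psiA_hasFDerivAt α hx).fderiv]
  simp [Lmap_single]
  ring

lemma fden_continuous : Continuous (fden α) := by
  apply continuous_const.sub
  exact continuous_finset_sum _ fun j _ =>
    continuous_const.mul (EuclideanSpace.proj (𝕜 := ℝ) j).continuous

lemma pd2 (j k : Fin d) {x : EuclideanSpace ℝ (Fin d)} (hx : fden α x ≠ 0) :
    pdR j (pdR k (psiA α)) x
      = 2 * Real.sqrt 2 * Ac α j * Ac α k * ((fden α x)^3)⁻¹ := by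
  have hev : pdR k (psiA α) =ᶠ[nhds x]
      (fun y => Real.sqrt 2 * Ac α k * ((fden α y)^2)⁻¹) := by
    have hne : ∀ᶠ y in nhds x, fden α y ≠ 0 :=
      (fden_continuous α).continuousAt.eventually_ne hx
    exact hne.mono fun y hy => pd1 α k hy
  have h1 : HasDerivAt (fun t : ℝ => Real.sqrt 2 * Ac α k * (t^2)⁻¹)
      (Real.sqrt 2 * Ac α k * (-(2 * fden α x ^ 1) / (fden α x ^ 2)^2)) (fden α x) :=
    ((hasDerivAt_pow 2 (fden α x)).inv (pow_ne_zero 2 hx)).const_mul _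
  have h2 := h1.comp_hasFDerivAt x (fden_hasFDerivAt α x)
  rw [pdR, hev.fderiv_eq]
  have : (fun y => Real.sqrt 2 * Ac α k * ((fden α y)^2)⁻¹)
      = (fun t : ℝ => Real.sqrt 2 * Ac α k * (t^2)⁻¹) ∘ (fden α) := rfl
  rw [this, h2.fderiv]
  simp only [ContinuousLinearMap.coe_smul', Pi.smul_apply, ContinuousLinearMap.neg_apply,
    Lmap_single, smul_eq_mul]
  field_simp

end deriv


/-- `ψ_α` solves the static self-similar equation
`−(δ^{jk} − ξ^jξ^k)∂_j∂_k ψ_α + 4ξ^j∂_j ψ_α + 2ψ_α = ψ_α³` wherever its denominator is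
nonzero. -/
theorem stmt_13 (d : ℕ) (α : Fin d → ℝ) (ξ : EuclideanSpace ℝ (Fin d))
    (h : A0 α - ∑ j, Ac α j * ξ j ≠ 0) :
    -(∑ j, ∑ k, ((if j = k then (1 : ℝ) else 0) - ξ j * ξ k) * pdR j (pdR k (psiA α)) ξ) +
        4 * (∑ j, ξ j * pdR j (psiA α) ξ) + 2 * psiA α ξ =
      (psiA α ξ) ^ 3 := by
  classical
  have hf : fden α ξ ≠ 0 := h
  set F := fden α ξ with hF
  set T := ∑ j, Ac α j * ξ j with hT
  have hFT : F = A0 α - T := rfl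
  have e2 : ∀ j : Fin d, pdR j (psiA α) ξ = Real.sqrt 2 * Ac α j * (F^2)⁻¹ :=
    fun j => pd1 α j hf
  have e1 : ∀ j k : Fin d, pdR j (pdR k (psiA α)) ξ
      = 2 * Real.sqrt 2 * Ac α j * Ac α k * (F^3)⁻¹ := fun j k => pd2 α j k hf
  have hpsi : psiA α ξ = Real.sqrt 2 / F := rfl
  simp only [e1, e2, hpsi]
  have hdouble : ∑ j, ∑ k, ((if j = k then (1:ℝ) else 0) - ξ j * ξ k) *
        (2 * Real.sqrt 2 * Ac α j * Ac α k * (F^3)⁻¹)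
      = 2 * Real.sqrt 2 * (F^3)⁻¹ * (∑ j, (Ac α j)^2)
        - 2 * Real.sqrt 2 * (F^3)⁻¹ * T^2 := by
    have expand : ∀ j : Fin d,
        ∑ k, ((if j = k then (1:ℝ) else 0) - ξ j * ξ k) *
          (2 * Real.sqrt 2 * Ac α j * Ac α k * (F^3)⁻¹)
        = 2 * Real.sqrt 2 * (F^3)⁻¹ * (Ac α j)^2
          - 2 * Real.sqrt 2 * (F^3)⁻¹ * (Ac α j * ξ j) * T := by
      intro j
      have step : ∀ k : Fin d, ((if j = k then (1:ℝ) else 0) - ξ j * ξ k) *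
            (2 * Real.sqrt 2 * Ac α j * Ac α k * (F^3)⁻¹)
          = (if j = k then 2 * Real.sqrt 2 * (F^3)⁻¹ * (Ac α j)^2 else 0)
            - (2 * Real.sqrt 2 * (F^3)⁻¹ * (Ac α j * ξ j)) * (Ac α k * ξ k) := by
        intro k
        by_cases hjk : j = k
        · subst hjk; simp; ring
        · simp [hjk]; ring
      rw [Finset.sum_congr rfl fun k _ => step k, Finset.sum_sub_distrib,
        Finset.sum_ite_eq, ← Finset.mul_sum, ← hT]
      simp
    rw [Finset.sum_congr rfl fun j _ => expand j, Finset.sum_sub_distrib]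
    congr 1
    · rw [Finset.mul_sum]
    · rw [← Finset.sum_mul, ← Finset.mul_sum, ← hT]; ring
  rw [hdouble]
  have hsum4 : ∑ j, ξ j * (Real.sqrt 2 * Ac α j * (F^2)⁻¹)
      = Real.sqrt 2 * (F^2)⁻¹ * T := by
    rw [hT, Finset.mul_sum]
    exact Finset.sum_congr rfl fun j _ => by ring
  rw [hsum4]
  have hkey : ∑ j, (Ac α j)^2 = (A0 α)^2 - 1 := by
    have := key_id α; linarith
  rw [hkey]
  have hs2 : Real.sqrt 2 ^ 3 = 2 * Real.sqrt 2 := by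
    have h2 : Real.sqrt 2 ^ 2 = 2 := Real.sq_sqrt (by norm_num)
    rw [pow_succ, h2]
  have hFne : F ≠ 0 := hf
  field_simp
  rw [hFT, Real.sq_sqrt (by norm_num : (0:ℝ) ≤ 2)]
  ring

end
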